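/- arXiv:1905.07582 — 3 statements merged into one kernel-verified Lean document; each statement's English description precedes it below -/
import Mathlib

section
/- Let α ∈ (0, 1/4) be irrational with convergent denominators (q_s)_{s≥0}, and write α_s = ‖q_s α‖ (distance from q_s α to ℤ) and ⟨q_s α⟩ for the representative of q_s α mod 1 in [−1/2, 1/2). If S ∈ ℕ and (b_s)_{1≤s≤S} are integers with 0 ≤ b_s ≤ ⌊q_{s+1}/q_s⌋ for each s, then Σ_{s=1}^S b_s ⟨q_s α⟩ lies in [−1/2, 1/2), and hence ⟨(Σ_{s=1}^S b_s q_s) α⟩ = Σ_{s=1}^S b_s ⟨q_s α⟩. -/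
/-- The representative of `x` mod 1 lying in `[-1/2, 1/2)`. -/
noncomputable def repr1 (x : ℝ) : ℝ := x - round x

open GenContFract Finset

/-- Let `α ∈ (0,1/4)` be irrational, with continued fraction convergent denominators
`q_s`. If `0 ≤ b_s ≤ ⌊q_{s+1}/q_s⌋` for `1 ≤ s ≤ S`, then `Σ_{s=1}^S b_s ⟨q_s α⟩`
lies in `[-1/2, 1/2)`, and hence equals `⟨(Σ_{s=1}^S b_s q_s) α⟩`. -/
theorem stmt6 (α : ℝ) (hirr : Irrational α) (hα : α ∈ Set.Ioo (0 : ℝ) (1/4))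
    (q : ℕ → ℝ) (hq : ∀ s, q s = (GenContFract.of α).dens s)
    (S : ℕ) (b : ℕ → ℤ)
    (hb : ∀ s, 1 ≤ s → s ≤ S → 0 ≤ b s ∧ (b s : ℝ) ≤ ⌊q (s + 1) / q s⌋) :
    (∑ s ∈ Finset.Icc 1 S, (b s : ℝ) * repr1 (q s * α)) ∈
        Set.Ico (-(1/2) : ℝ) (1/2) ∧
      repr1 ((∑ s ∈ Finset.Icc 1 S, (b s : ℝ) * q s) * α) =
        ∑ s ∈ Finset.Icc 1 S, (b s : ℝ) * repr1 (q s * α) := by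
  obtain ⟨hα0, hα4⟩ := hα
  -- the continued fraction never terminates
  have hterm : ∀ n, ¬(GenContFract.of α).TerminatedAt n := by
    intro n hn
    obtain ⟨q', hq'⟩ := (terminates_iff_rat α).mp ⟨n, hn⟩
    exact hirr ⟨q', hq'.symm⟩
  have hsome : ∀ n, (IntFractPair.stream α n).isSome := by
    intro n
    cases n with
    | zero => rw [IntFractPair.stream_zero]; rfl
    | succ m =>
      have h := hterm m
      rw [of_terminatedAt_n_iff_succ_nth_intFractPair_stream_eq_none] at h
      exact Option.isSome_iff_ne_none.mpr h
  set ifp : ℕ → IntFractPair ℝ := fun n => (IntFractPair.stream α n).get (hsome n) with hifpdef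
  have hifp : ∀ n, IntFractPair.stream α n = some (ifp n) := fun n =>
    (Option.some_get (hsome n)).symm
  have hfr0 : ∀ n, 0 < (ifp n).fr := by
    intro n
    rcases (IntFractPair.nth_stream_fr_nonneg (hifp n)).lt_or_eq with h | h
    · exact h
    · exfalso
      have h2 := IntFractPair.stream_eq_none_of_fr_eq_zero (hifp n) h.symm
      have h3 := hsome (n+1)
      rw [h2] at h3
      simp at h3
  have hfr1 : ∀ n, (ifp n).fr < 1 := fun n => IntFractPair.nth_stream_fr_lt_one (hifp n)
  have hfrinv : ∀ n, 1 < (ifp n).fr⁻¹ := fun n => (one_lt_inv₀ (hfr0 n)).mpr (hfr1 n)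
  have hsucc : ∀ n, ifp (n+1) = IntFractPair.of (ifp n).fr⁻¹ := by
    intro n
    obtain ⟨p, hp, _, hpo⟩ := IntFractPair.succ_nth_stream_eq_some_iff.mp (hifp (n+1))
    rw [hifp n] at hp
    cases Option.some_inj.mp hp
    exact hpo.symm
  have hs : ∀ n, (GenContFract.of α).s.get? n = some ⟨1, ((ifp (n+1)).b : ℝ)⟩ := fun n =>
    get?_of_eq_some_of_succ_get?_intFractPair_stream (hifp (n+1))
  -- `ifp 0`
  have hfloor0 : (⌊α⌋ : ℤ) = 0 := by
    rw [Int.floor_eq_iff]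
    constructor <;> push_cast <;> linarith
  have hifp0 : (ifp 0).fr = α := by
    have h0 : some (ifp 0) = some (IntFractPair.of α) := by
      rw [← hifp 0, IntFractPair.stream_zero]
    have := Option.some_inj.mp h0
    rw [this]
    show Int.fract α = α
    rw [Int.fract, hfloor0]; push_cast; ring
  -- denominators
  have hB0 : (GenContFract.of α).dens 0 = 1 := zeroth_den_eq_one
  have hB1 : (GenContFract.of α).dens 1 = ((ifp 1).b : ℝ) := by
    have h := first_den_eq (hs 0)
    simpa using h
  have hb1 : (4 : ℤ) ≤ (ifp 1).b := by
    have h1 : (ifp 1).b = ⌊(ifp 0).fr⁻¹⌋ := by rw [hsucc 0]; rfl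
    rw [h1, Int.le_floor, hifp0]
    push_cast
    rw [le_inv_comm₀ (by norm_num) hα0]
    linarith
  have hB4 : ∀ n, (4 : ℝ) ≤ (GenContFract.of α).dens (n+1) := by
    intro n
    induction n with
    | zero => rw [hB1]; exact_mod_cast hb1
    | succ m ih => exact le_trans ih of_den_mono
  have hB1le : ∀ n, (1 : ℝ) ≤ (GenContFract.of α).dens n := by
    intro n
    cases n with
    | zero => rw [hB0]
    | succ m => linarith [hB4 m]
  have hBpos : ∀ n, (0:ℝ) < (GenContFract.of α).dens n := fun n => lt_of_lt_of_le one_pos (hB1le n)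
  have hpB : ∀ n, ((GenContFract.of α).contsAux (n+1)).b = (GenContFract.of α).dens n := by
    intro n
    rw [den_eq_conts_b, nth_cont_eq_succ_nth_contAux]
  have hpB0 : ((GenContFract.of α).contsAux 0).b = 0 := by
    rw [zeroth_contAux_eq_one_zero]
  have hpBnonneg : ∀ n, 0 ≤ ((GenContFract.of α).contsAux n).b := by
    intro n
    cases n with
    | zero => rw [hpB0]
    | succ m => rw [hpB]; exact (hBpos m).le
  -- the denominator recurrence
  have hBrec : ∀ n, (GenContFract.of α).dens (n+1) =
      (⌊(ifp n).fr⁻¹⌋ : ℝ) * (GenContFract.of α).dens n + ((GenContFract.of α).contsAux n).b := by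
    intro n
    cases n with
    | zero =>
      rw [hB1, hB0, hpB0, hsucc 0]
      show ((⌊(ifp 0).fr⁻¹⌋ : ℤ) : ℝ) = _
      ring
    | succ m =>
      have h := dens_recurrence (hs (m+1)) rfl rfl
      rw [h, hpB m]
      have hb2 : (ifp (m+2)).b = ⌊(ifp (m+1)).fr⁻¹⌋ := by rw [hsucc (m+1)]; rfl
      rw [hb2]
      push_cast
      ring
  -- the exact error denominators
  set D : ℕ → ℝ := fun n =>
    (ifp n).fr⁻¹ * (GenContFract.of α).dens n + ((GenContFract.of α).contsAux n).b with hD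
  have hDlb : ∀ n, (GenContFract.of α).dens (n+1) ≤ D n := by
    intro n
    rw [hBrec n]
    have := Int.floor_le ((ifp n).fr⁻¹)
    have := (hBpos n).le
    simp only [hD]
    nlinarith
  have hDub : ∀ n, D n < (GenContFract.of α).dens (n+1) + (GenContFract.of α).dens n := by
    intro n
    rw [hBrec n]
    have := Int.lt_floor_add_one ((ifp n).fr⁻¹)
    have := hBpos n
    simp only [hD]
    nlinarith
  have hD4 : ∀ n, (4:ℝ) ≤ D n := fun n => le_trans (hB4 n) (hDlb n)
  have hDpos : ∀ n, (0:ℝ) < D n := fun n => lt_of_lt_of_le (by norm_num) (hD4 n)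
  -- exact error formula
  have hsub : ∀ n, α - (GenContFract.of α).convs n =
      (-1)^n / ((GenContFract.of α).dens n * D n) := by
    intro n
    have h := sub_convs_eq (hifp n)
    simp only [(hfr0 n).ne', if_false] at h
    rw [h, hpB n]
  have hkey : ∀ n, (GenContFract.of α).dens n * α - (GenContFract.of α).nums n
      = (-1)^n / D n := by
    intro n
    have hd : (GenContFract.of α).dens n ≠ 0 := (hBpos n).ne'
    have hDn : D n ≠ 0 := (hDpos n).ne'
    calc (GenContFract.of α).dens n * α - (GenContFract.of α).nums n
        = (GenContFract.of α).dens n *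
            (α - (GenContFract.of α).nums n / (GenContFract.of α).dens n) := by field_simp
      _ = (GenContFract.of α).dens n * ((-1)^n / ((GenContFract.of α).dens n * D n)) := by
          rw [← conv_eq_num_div_den, hsub n]
      _ = (-1)^n / D n := by field_simp
  -- numerators are integers
  have hA : ∀ n, (∃ a : ℤ, (GenContFract.of α).nums n = (a:ℝ)) := by
    have H : ∀ n, (∃ a : ℤ, (GenContFract.of α).nums n = (a:ℝ)) ∧
        (∃ a : ℤ, (GenContFract.of α).nums (n+1) = (a:ℝ)) := by
      intro n
      induction n with
      | zero =>
        refine ⟨⟨⌊α⌋, ?_⟩, ⟨(ifp 1).b * ⌊α⌋ + 1, ?_⟩⟩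
        · rw [zeroth_num_eq_h, of_h_eq_floor]
        · have h := first_num_eq (hs 0)
          rw [h, of_h_eq_floor]
          push_cast
          ring
      | succ m ih =>
        obtain ⟨⟨a1, ha1⟩, ⟨a2, ha2⟩⟩ := ih
        refine ⟨⟨a2, ha2⟩, ⟨(ifp (m+2)).b * a2 + a1, ?_⟩⟩
        have h := nums_recurrence (hs (m+1)) ha1 ha2
        rw [h]
        push_cast
        ring
    exact fun n => (H n).1
  -- the signed error and its value
  set θ : ℕ → ℝ := fun n => 1 / D n with hθ
  have hθpos : ∀ n, 0 < θ n := fun n => by simp only [hθ]; exact one_div_pos.mpr (hDpos n)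
  have hθ4 : ∀ n, θ n ≤ 1/4 := by
    intro n
    rw [hθ]
    rw [div_le_div_iff₀ (hDpos n) (by norm_num)]
    linarith [hD4 n]
  have hmain : ∀ n, repr1 (q n * α) = (-1)^n * θ n ∧
      (GenContFract.of α).nums n = ((round (q n * α) : ℤ) : ℝ) := by
    intro n
    obtain ⟨a, ha⟩ := hA n
    have h1 : q n * α = (-1)^n * θ n + a := by
      rw [hq]
      have h := hkey n
      rw [ha] at h
      simp only [hθ]
      rw [mul_one_div]
      linarith
    have h2 : |(-1:ℝ)^n * θ n| < 1/2 := by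
      rw [abs_mul, abs_pow, abs_neg, abs_one, one_pow, one_mul, abs_of_pos (hθpos n)]
      linarith [hθ4 n]
    have hr : round (q n * α) = a := by
      rw [h1, round_add_intCast]
      have h0 : round ((-1:ℝ)^n * θ n) = 0 := by
        rw [round_eq_zero_iff]
        rw [abs_lt] at h2
        exact ⟨by linarith [h2.1], h2.2⟩
      rw [h0, zero_add]
    constructor
    · rw [repr1, hr, h1]; ring
    · rw [ha, hr]
  have hrepr : ∀ n, repr1 (q n * α) = (-1)^n * θ n := fun n => (hmain n).1
  have hround : ∀ n, ((GenContFract.of α).nums n) = ((round (q n * α) : ℤ) : ℝ) :=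
    fun n => (hmain n).2
  -- the θ recurrence
  have hθrec : ∀ m, θ m = ((ifp (m+2)).b : ℝ) * θ (m+1) + θ (m+2) := by
    intro m
    have hd := dens_recurrence (hs (m+1)) rfl rfl
    have hn := nums_recurrence (hs (m+1)) rfl rfl
    have E : ∀ j, (-1:ℝ)^j * θ j
        = (GenContFract.of α).dens j * α - (GenContFract.of α).nums j := by
      intro j
      rw [hkey j]
      simp only [hθ]
      rw [mul_one_div]
    have comb : (-1:ℝ)^(m+2) * θ (m+2)
        = ((ifp (m+2)).b:ℝ) * ((-1:ℝ)^(m+1) * θ (m+1)) + (-1:ℝ)^m * θ m := by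
      rw [E, E, E, hd, hn]
      ring
    have hne : ((-1:ℝ)^m) ≠ 0 := pow_ne_zero _ (by norm_num)
    apply mul_left_cancel₀ hne
    linear_combination -comb
  -- strict monotonicity of denominators
  have hBstrict : ∀ t, (GenContFract.of α).dens t < (GenContFract.of α).dens (t+1) := by
    intro t
    cases t with
    | zero => rw [hB0]; linarith [hB4 0]
    | succ m =>
      have hrec := hBrec (m+1)
      rw [hpB m] at hrec
      have hfl : (1:ℝ) ≤ (⌊(ifp (m+1)).fr⁻¹⌋ : ℝ) := by
        exact_mod_cast Int.le_floor.mpr (by exact_mod_cast (hfrinv (m+1)).le)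
      nlinarith [hB1le m, hBpos (m+1), hrec]
  -- the floor of the denominator quotient is the partial quotient
  have hfloorq : ∀ t, (⌊q (t+2) / q (t+1)⌋ : ℤ) = (ifp (t+2)).b := by
    intro t
    have hcz : (ifp (t+2)).b = ⌊(ifp (t+1)).fr⁻¹⌋ := by rw [hsucc (t+1)]; rfl
    have hrec := hBrec (t+1)
    rw [hpB t, ← hcz] at hrec
    have h1 := hBpos t
    have h2 := hBpos (t+1)
    have h3 := hBstrict t
    rw [hq, hq, Int.floor_eq_iff]
    constructor
    · rw [le_div_iff₀ h2, hrec]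
      nlinarith
    · rw [div_lt_iff₀ h2, hrec]
      push_cast
      nlinarith
  -- the key alternating-sum estimate, by downward induction
  have key : ∀ n j, (j + 1) + n = S + 1 →
      -(θ (j+1)) ≤ (-1:ℝ)^(j+1) * ∑ s ∈ Finset.Icc (j+1) S, (b s:ℝ) * repr1 (q s * α) ∧
      (-1:ℝ)^(j+1) * ∑ s ∈ Finset.Icc (j+1) S, (b s:ℝ) * repr1 (q s * α) ≤ θ j := by
    intro n
    induction n with
    | zero =>
      intro j hj
      rw [Finset.Icc_eq_empty (by omega), Finset.sum_empty, mul_zero]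
      exact ⟨by linarith [hθpos (j+1)], (hθpos j).le⟩
    | succ m IH =>
      intro j hj
      have hjS : j + 1 ≤ S := by omega
      obtain ⟨IH1, IH2⟩ := IH (j+1) (by omega)
      rw [Finset.Icc_add_one_left_eq_Ioc] at IH1 IH2
      obtain ⟨hb0, hb1'⟩ := hb (j+1) (by omega) hjS
      rw [hfloorq j] at hb1'
      rw [Finset.Icc_eq_cons_Ioc hjS, Finset.sum_cons]
      set R := ∑ s ∈ Finset.Ioc (j+1) S, (b s:ℝ) * repr1 (q s * α) with hR
      have hPP : ((-1:ℝ))^(j+1) * ((-1:ℝ))^(j+1) = 1 := by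
        rw [← pow_add]
        exact Even.neg_one_pow ⟨j+1, by ring⟩
      have e1 : (-1:ℝ)^(j+1) * ((b (j+1):ℝ) * repr1 (q (j+1) * α) + R)
          = (b (j+1):ℝ) * θ (j+1) + (-1:ℝ)^(j+1) * R := by
        rw [hrepr (j+1)]
        linear_combination ((b (j+1):ℝ) * θ (j+1)) * hPP
      have e2 : (-1:ℝ)^(j+1) * R = -((-1:ℝ)^(j+1+1) * R) := by ring
      have hbθ : 0 ≤ (b (j+1):ℝ) * θ (j+1) :=
        mul_nonneg (by exact_mod_cast hb0) (hθpos (j+1)).le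
      have hbc : (b (j+1):ℝ) * θ (j+1) ≤ ((ifp (j+2)).b : ℝ) * θ (j+1) :=
        mul_le_mul_of_nonneg_right hb1' (hθpos (j+1)).le
      have hrec := hθrec j
      constructor
      · rw [e1, e2]; linarith
      · rw [e1, e2]; linarith
  -- conclude
  obtain ⟨hT1, hT2⟩ := key S 0 (by omega)
  norm_num at hT1 hT2
  set T := ∑ s ∈ Finset.Icc 1 S, (b s:ℝ) * repr1 (q s * α) with hTdef
  have hTlb : -(1/4 : ℝ) ≤ T := by linarith [hθ4 0]
  have hTub : T ≤ 1/4 := by linarith [hθ4 1]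
  have hmem : T ∈ Set.Ico (-(1/2) : ℝ) (1/2) := ⟨by linarith, by linarith⟩
  refine ⟨hmem, ?_⟩
  have hsum : (∑ s ∈ Finset.Icc 1 S, (b s:ℝ) * q s) * α
      = ((∑ s ∈ Finset.Icc 1 S, b s * round (q s * α) : ℤ) : ℝ) + T := by
    rw [Finset.sum_mul]
    push_cast
    rw [← Finset.sum_add_distrib]
    apply Finset.sum_congr rfl
    intro s _
    rw [repr1]
    ring
  rw [hsum, repr1, add_comm, round_add_intCast]
  have h0 : round T = 0 := round_eq_zero_iff.mpr ⟨by linarith, by linarith⟩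
  rw [h0]
  push_cast
  ring
end

section
/- Let r₁ < r₂ < r₃ be natural numbers (r₁ ≤ r₂ ≤ r₃, r₁ ≠ r₃). There is a constant C depending only on r₃ such that for every 1-periodic C^{r₃} function φ : ℝ → ℝ, ‖φ‖_{r₂} ≤ C ‖φ‖_{r₁}^{(r₃−r₂)/(r₃−r₁)} ‖φ‖_{r₃}^{(r₂−r₁)/(r₃−r₁)}, where ‖φ‖_r = max_{0 ≤ j ≤ r} sup|D^j φ|. -/
open Function Set Finset



lemma had_per_deriv {f : ℝ → ℝ} (hp : Function.Periodic f 1) :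
    Function.Periodic (deriv f) 1 := by
  intro x
  have hf : (fun y => f (y + 1)) = f := funext hp
  have h2 := deriv_comp_add_const f 1 x
  rw [hf] at h2
  exact h2.symm

lemma had_per_iter {f : ℝ → ℝ} (hp : Function.Periodic f 1) (n : ℕ) :
    Function.Periodic (iteratedDeriv n f) 1 := by
  induction n with
  | zero => simpa [iteratedDeriv_zero] using hp
  | succ n ih => rw [iteratedDeriv_succ]; exact had_per_deriv ih

lemma had_bdd {f : ℝ → ℝ} (hc : Continuous f) (hp : Function.Periodic f 1) :
    BddAbove (Set.range fun x => |f x|) := by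
  obtain ⟨C, hC⟩ := isBounded_iff_forall_norm_le.mp
    (hp.isBounded_of_continuous one_ne_zero hc)
  refine ⟨C, ?_⟩
  rintro y ⟨x, rfl⟩
  exact hC (f x) ⟨x, rfl⟩


lemma had_step {g : ℝ → ℝ} (hg : Differentiable ℝ g) (hg' : Differentiable ℝ (deriv g))
    {M0 M2 : ℝ} (h0 : ∀ x, |g x| ≤ M0) (h2 : ∀ x, |deriv (deriv g) x| ≤ M2)
    {h : ℝ} (hh : 0 < h) (x : ℝ) : |deriv g x| ≤ 2 * M0 / h + h * M2 := by
  -- first: Lipschitz bound on deriv g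
  have lip : ∀ t, |deriv g t - deriv g x| ≤ M2 * |t - x| := by
    intro t
    rcases le_total x t with hxt | hxt
    · have := norm_image_sub_le_of_norm_deriv_le_segment'
        (f := deriv g) (f' := deriv (deriv g)) (a := x) (b := t)
        (fun y _ => ((hg' y).hasDerivAt).hasDerivWithinAt)
        (fun y _ => h2 y) t (right_mem_Icc.2 hxt)
      simpa [Real.norm_eq_abs, abs_of_nonneg (sub_nonneg.2 hxt)] using this
    · have := norm_image_sub_le_of_norm_deriv_le_segment'
        (f := deriv g) (f' := deriv (deriv g)) (a := t) (b := x)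
        (fun y _ => ((hg' y).hasDerivAt).hasDerivWithinAt)
        (fun y _ => h2 y) x (right_mem_Icc.2 hxt)
      rw [abs_sub_comm (deriv g t), abs_sub_comm t]
      simpa [Real.norm_eq_abs, abs_of_nonneg (sub_nonneg.2 hxt)] using this
  -- second: Taylor-type bound via F t = g t - t * deriv g x
  set c := deriv g x with hc
  have hF : ∀ y ∈ Icc x (x + h), HasDerivWithinAt (fun t => g t - t * c)
      (deriv g y - c) (Icc x (x + h)) y := by
    intro y _
    exact (((hg y).hasDerivAt).sub ((hasDerivAt_id y).mul_const c)).hasDerivWithinAt.congr_deriv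
      (by ring)
  have bound : ∀ y ∈ Ico x (x + h), ‖deriv g y - c‖ ≤ M2 * h := by
    intro y hy
    have : |y - x| ≤ h := by
      rw [abs_of_nonneg (sub_nonneg.2 hy.1)]; linarith [hy.2]
    calc ‖deriv g y - c‖ = |deriv g y - deriv g x| := rfl
      _ ≤ M2 * |y - x| := lip y
      _ ≤ M2 * h := by
          have hM2 : 0 ≤ M2 := le_trans (abs_nonneg _) (h2 x)
          exact mul_le_mul_of_nonneg_left this hM2
  have key := norm_image_sub_le_of_norm_deriv_le_segment' hF bound (x + h)
    (right_mem_Icc.2 (by linarith))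
  -- key : ‖(g (x+h) - (x+h)*c) - (g x - x*c)‖ ≤ M2*h*((x+h)-x)
  have key2 : |g (x + h) - g x - h * c| ≤ M2 * h * h := by
    have e : g (x + h) - (x + h) * c - (g x - x * c) = g (x + h) - g x - h * c := by ring
    simpa [Real.norm_eq_abs, e, add_sub_cancel_left] using key
  have hcb : |h * c| ≤ 2 * M0 + M2 * h * h := by
    have e : h * c = (g (x + h) - g x) - (g (x + h) - g x - h * c) := by ring
    rw [e]
    calc |(g (x + h) - g x) - (g (x + h) - g x - h * c)|
        ≤ |g (x + h) - g x| + |g (x + h) - g x - h * c| := abs_sub _ _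
      _ ≤ 2 * M0 + M2 * h * h := by
          have t1 : |g (x + h) - g x| ≤ |g (x + h)| + |g x| := abs_sub _ _
          linarith [h0 (x + h), h0 x, key2]
  have hcd : |c| ≤ (2 * M0 + M2 * h * h) / h := by
    rw [le_div_iff₀ hh]
    calc |c| * h = |h * c| := by rw [abs_mul, abs_of_pos hh, mul_comm]
      _ ≤ _ := hcb
  calc |c| ≤ (2 * M0 + M2 * h * h) / h := hcd
    _ = 2 * M0 / h + h * M2 := by field_simp

lemma had_landau {g : ℝ → ℝ} (hg : Differentiable ℝ g) (hg' : Differentiable ℝ (deriv g))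
    {M0 M2 : ℝ} (h0 : ∀ x, |g x| ≤ M0) (h2 : ∀ x, |deriv (deriv g) x| ≤ M2) (x : ℝ) :
    |deriv g x| ≤ 3 * Real.sqrt (M0 * M2) := by
  have hM0 : 0 ≤ M0 := (abs_nonneg _).trans (h0 x)
  have hM2 : 0 ≤ M2 := (abs_nonneg _).trans (h2 x)
  have step : ∀ h : ℝ, 0 < h → |deriv g x| ≤ 2 * M0 / h + h * M2 :=
    fun h hh => had_step hg hg' h0 h2 hh x
  rcases eq_or_lt_of_le hM2 with hm2 | hm2
  · -- M2 = 0
    have hc0 : |deriv g x| ≤ 0 := by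
      by_contra hcon
      push_neg at hcon
      have hh : 0 < (2 * M0 + 1) / |deriv g x| := by positivity
      have := step _ hh
      rw [← hm2] at this
      rw [div_div_eq_mul_div, mul_zero, add_zero] at this
      have h21 : (0:ℝ) < 2 * M0 + 1 := by linarith
      rw [le_div_iff₀ h21] at this
      nlinarith
    calc |deriv g x| ≤ 0 := hc0
      _ ≤ 3 * Real.sqrt (M0 * M2) := by positivity
  · rcases eq_or_lt_of_le hM0 with hm0 | hm0
    · -- M0 = 0
      have hc0 : |deriv g x| ≤ 0 := by
        refine le_of_forall_pos_le_add (fun ε hε => ?_)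
        have hh : 0 < ε / M2 := by positivity
        have := step _ hh
        rw [← hm0] at this
        rw [mul_zero, zero_div, zero_add, div_mul_cancel₀ _ (ne_of_gt hm2)] at this
        linarith
      calc |deriv g x| ≤ 0 := hc0
        _ ≤ 3 * Real.sqrt (M0 * M2) := by positivity
    · -- both positive
      set a := Real.sqrt M0 with ha
      set b := Real.sqrt M2 with hb
      have hA : 0 < a := Real.sqrt_pos.mpr hm0
      have hB : 0 < b := Real.sqrt_pos.mpr hm2
      have hA2 : a * a = M0 := Real.mul_self_sqrt hM0
      have hB2 : b * b = M2 := Real.mul_self_sqrt hM2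
      have hsq : Real.sqrt (M0 * M2) = a * b := by
        rw [← hA2, ← hB2, show a * a * (b * b) = (a * b) * (a * b) by ring,
          Real.sqrt_mul_self (by positivity)]
      have := step (a / b) (by positivity)
      rw [hsq]
      calc |deriv g x| ≤ 2 * M0 / (a / b) + (a / b) * M2 := this
        _ = 3 * (a * b) := by
            rw [← hA2, ← hB2]
            field_simp
            ring


lemma had_seq (b : ℕ) (v : ℕ → ℝ)
    (hconv : ∀ k : ℕ, k + 2 ≤ b → 2 * v (k + 1) ≤ v k + v (k + 2)) :
    ∀ j ≤ b, (b : ℝ) * v j ≤ ((b : ℝ) - j) * v 0 + j * v b := by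
  set d : ℕ → ℝ := fun k => v (k + 1) - v k with hd
  have dmono : ∀ k l : ℕ, k ≤ l → l + 1 ≤ b → d k ≤ d l := by
    intro k l hkl
    induction l, hkl using Nat.le_induction with
    | base => intro _; exact le_refl _
    | succ n hn ih =>
        intro hnb
        have h1 := ih (by omega)
        have h2 := hconv n (by omega)
        simp only [hd] at h1 ⊢
        linarith
  have S1 : ∀ j : ℕ, ∑ k ∈ Finset.range j, d k = v j - v 0 := by
    intro j
    simpa [hd] using Finset.sum_range_sub (f := v) j
  intro j hj
  rcases Nat.eq_or_lt_of_le hj with rfl | hjb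
  · push_cast; ring_nf; linarith [le_refl ((j:ℝ) * v j)]
  rcases Nat.eq_zero_or_pos j with rfl | hj0
  · push_cast; ring_nf; linarith [le_refl ((b:ℝ) * v 0)]
  have A : v j - v 0 ≤ (j : ℝ) * d (j - 1) := by
    calc v j - v 0 = ∑ k ∈ Finset.range j, d k := (S1 j).symm
      _ ≤ ∑ _k ∈ Finset.range j, d (j - 1) :=
          Finset.sum_le_sum (fun k hk => dmono k (j - 1)
            (by have := Finset.mem_range.mp hk; omega) (by omega))
      _ = (j : ℝ) * d (j - 1) := by
          rw [Finset.sum_const, Finset.card_range, nsmul_eq_mul]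
  have S2 : ∑ k ∈ Finset.Ico j b, d k = v b - v j := by
    rw [Finset.sum_Ico_eq_sub d hj, S1, S1]; ring
  have B : ((b : ℝ) - j) * d (j - 1) ≤ v b - v j := by
    calc ((b : ℝ) - j) * d (j - 1) = ∑ _k ∈ Finset.Ico j b, d (j - 1) := by
          rw [Finset.sum_const, Nat.card_Ico, nsmul_eq_mul]
          rw [Nat.cast_sub hj]
      _ ≤ ∑ k ∈ Finset.Ico j b, d k :=
          Finset.sum_le_sum (fun k hk => by
            have hm := Finset.mem_Ico.mp hk
            exact dmono (j - 1) k (by omega) (by omega))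
      _ = v b - v j := S2
  have hbj : (0:ℝ) ≤ (b : ℝ) - j := by
    have : (j:ℝ) ≤ b := by exact_mod_cast hj
    linarith
  have hjR : (0:ℝ) ≤ (j : ℝ) := Nat.cast_nonneg j
  have A' := mul_le_mul_of_nonneg_left A hbj
  have B' := mul_le_mul_of_nonneg_left B hjR
  nlinarith [A', B']



lemma had_shift (φ : ℝ → ℝ) (a : ℕ) :
    ∀ i : ℕ, iteratedDeriv i (iteratedDeriv a φ) = iteratedDeriv (a + i) φ := by
  intro i
  induction i with
  | zero => simp
  | succ i ih =>
      rw [iteratedDeriv_succ, ih, show a + (i + 1) = (a + i) + 1 from rfl, iteratedDeriv_succ]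

lemma had_deriv_zero {f : ℝ → ℝ} (hf : Differentiable ℝ f) (hp : Function.Periodic f 1)
    (hg : Differentiable ℝ (deriv f)) (hz : ∀ x, deriv (deriv f) x = 0) :
    ∀ x, deriv f x = 0 := by
  have hconst : ∀ x, deriv f x = deriv f 0 := fun x => is_const_of_deriv_eq_zero hg hz x 0
  set c := deriv f 0 with hc
  have hF : Differentiable ℝ (fun x => f x - c * x) :=
    hf.sub (differentiable_id.const_mul c)
  have hF' : ∀ x, deriv (fun x => f x - c * x) x = 0 := by
    intro x
    have h1 : HasDerivAt (fun x => f x - c * x) (deriv f x - c * 1) x :=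
      ((hf x).hasDerivAt).sub ((hasDerivAt_id x).const_mul c)
    rw [h1.deriv, hconst x]
    ring
  have heq := is_const_of_deriv_eq_zero hF hF' 1 0
  simp only [mul_one, mul_zero, sub_zero] at heq
  have hper : f 1 = f 0 := by simpa using hp 0
  intro x
  rw [hconst x]
  have : c = 0 := by rw [hper] at heq; linarith
  exact this

lemma had_up {φ : ℝ → ℝ} {j : ℕ} (h : iteratedDeriv j φ = fun _ => 0) :
    ∀ k, j ≤ k → iteratedDeriv k φ = fun _ => 0 := by
  intro k hk
  induction k, hk using Nat.le_induction with
  | base => exact h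
  | succ n hn ih =>
      rw [iteratedDeriv_succ, ih]
      funext x
      simp

lemma had_down {φ : ℝ → ℝ} {n : ℕ} (hper : Function.Periodic φ 1)
    (hcont : ∀ j, j ≤ n → Continuous (iteratedDeriv j φ))
    (hdiff : ∀ j, j < n → Differentiable ℝ (iteratedDeriv j φ))
    (hz : iteratedDeriv n φ = fun _ => 0) :
    ∀ j, 1 ≤ j → j ≤ n → iteratedDeriv j φ = fun _ => 0 := by
  have main : ∀ i : ℕ, ∀ j, j + i = n → 1 ≤ j → iteratedDeriv j φ = fun _ => 0 := by
    intro i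
    induction i with
    | zero => intro j hj _; rw [show j = n by omega]; exact hz
    | succ i ih =>
        intro j hji hj1
        have hnext : iteratedDeriv (j + 1) φ = fun _ => 0 := ih (j + 1) (by omega) (by omega)
        obtain ⟨m, rfl⟩ : ∃ m, j = m + 1 := ⟨j - 1, by omega⟩
        have hf : Differentiable ℝ (iteratedDeriv m φ) := hdiff m (by omega)
        have hfp := had_per_iter hper m
        have hg : Differentiable ℝ (deriv (iteratedDeriv m φ)) := by
          rw [← iteratedDeriv_succ]; exact hdiff (m + 1) (by omega)
        have hzz : ∀ x, deriv (deriv (iteratedDeriv m φ)) x = 0 := by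
          intro x
          rw [← iteratedDeriv_succ, ← iteratedDeriv_succ, hnext]
        have := had_deriv_zero hf hfp hg hzz
        funext x
        rw [iteratedDeriv_succ]
        exact this x
  intro j h1 hn
  exact main (n - j) j (by omega) h1



lemma had_chain (b : ℕ) (hb : 1 ≤ b) (φ : ℝ → ℝ) (hper : Function.Periodic φ 1)
    (hcont : ∀ j, j ≤ b → Continuous (iteratedDeriv j φ))
    (hdiff : ∀ j, j < b → Differentiable ℝ (iteratedDeriv j φ))
    (hpos : ∀ j ≤ b, 0 < ⨆ x, |iteratedDeriv j φ x|) :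
    ∀ j ≤ b, (⨆ x, |iteratedDeriv j φ x|) ≤
      Real.exp (Real.log 3 * b ^ 2) *
        (⨆ x, |iteratedDeriv 0 φ x|) ^ (((b : ℝ) - j) / b) *
        (⨆ x, |iteratedDeriv b φ x|) ^ ((j : ℝ) / b) := by
  set M : ℕ → ℝ := fun j => ⨆ x, |iteratedDeriv j φ x| with hM
  have hle : ∀ j, j ≤ b → ∀ x, |iteratedDeriv j φ x| ≤ M j := fun j hj x =>
    le_ciSup (had_bdd (hcont j hj) (had_per_iter hper j)) x
  -- Landau chain step
  have hconv : ∀ k, k + 2 ≤ b → M (k + 1) ≤ 3 * Real.sqrt (M k * M (k + 2)) := by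
    intro k hk
    have hg : Differentiable ℝ (iteratedDeriv k φ) := hdiff k (by omega)
    have hg' : Differentiable ℝ (deriv (iteratedDeriv k φ)) := by
      rw [← iteratedDeriv_succ]; exact hdiff (k + 1) (by omega)
    have h2 : ∀ x, |deriv (deriv (iteratedDeriv k φ)) x| ≤ M (k + 2) := by
      intro x
      rw [← iteratedDeriv_succ, ← iteratedDeriv_succ]
      exact hle (k + 2) hk x
    have hlan := had_landau hg hg' (hle k (by omega)) h2
    have : M (k + 1) = ⨆ x, |deriv (iteratedDeriv k φ) x| := by
      rw [hM]; simp only [iteratedDeriv_succ]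
    rw [this]
    exact ciSup_le hlan
  -- logarithms
  set L := Real.log 3 with hL
  have hl3 : 0 ≤ L := Real.log_nonneg (by norm_num)
  set u : ℕ → ℝ := fun j => Real.log (M j) with hu
  set v : ℕ → ℝ := fun j => u j + L * (j : ℝ) ^ 2 with hv
  have hconv' : ∀ k, k + 2 ≤ b → 2 * v (k + 1) ≤ v k + v (k + 2) := by
    intro k hk
    have h1 : u (k + 1) ≤ L + (u k + u (k + 2)) / 2 := by
      have hlog := Real.log_le_log (hpos (k + 1) (by omega)) (hconv k hk)
      rw [Real.log_mul (by norm_num)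
          (ne_of_gt (Real.sqrt_pos.mpr (mul_pos (hpos k (by omega)) (hpos (k + 2) hk)))),
        Real.log_sqrt (le_of_lt (mul_pos (hpos k (by omega)) (hpos (k + 2) hk))),
        Real.log_mul (ne_of_gt (hpos k (by omega))) (ne_of_gt (hpos (k + 2) hk))] at hlog
      simp only [hu]
      linarith
    simp only [hv]
    push_cast
    nlinarith [h1]
  intro j hj
  have hseq := had_seq b v hconv' j hj
  have hb0 : (0 : ℝ) < b := by exact_mod_cast hb
  have hjb : (j : ℝ) ≤ b := by exact_mod_cast hj
  have hj0 : (0 : ℝ) ≤ j := Nat.cast_nonneg j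
  have key : (b : ℝ) * u j ≤ ((b : ℝ) - j) * u 0 + j * u b + L * b ^ 3 := by
    simp only [hv] at hseq
    push_cast at hseq
    linarith [hseq, mul_nonneg (le_of_lt hb0) (mul_nonneg hl3 (sq_nonneg (j : ℝ))),
      mul_le_mul_of_nonneg_right hjb (mul_nonneg hl3 (sq_nonneg (b : ℝ)))]
  have final : u j ≤ Real.log (M 0) * (((b : ℝ) - j) / b) + Real.log (M b) * ((j : ℝ) / b)
      + L * b ^ 2 := by
    have h2 : u j ≤ (((b : ℝ) - j) * u 0 + j * u b + L * b ^ 3) / b := by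
      rw [le_div_iff₀ hb0]; linarith [key]
    have h3 : (((b : ℝ) - j) * u 0 + j * u b + L * b ^ 3) / b
        = u 0 * (((b : ℝ) - j) / b) + u b * ((j : ℝ) / b) + L * b ^ 2 := by
      field_simp
    exact h2.trans_eq h3
  calc M j = Real.exp (u j) := (Real.exp_log (hpos j hj)).symm
    _ ≤ Real.exp (Real.log (M 0) * (((b : ℝ) - j) / b) + Real.log (M b) * ((j : ℝ) / b)
          + L * b ^ 2) := Real.exp_le_exp.mpr final
    _ = Real.exp (L * b ^ 2) * M 0 ^ (((b : ℝ) - j) / b) * M b ^ ((j : ℝ) / b) := by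
        rw [Real.exp_add, Real.exp_add, ← Real.rpow_def_of_pos (hpos 0 (by omega)),
          ← Real.rpow_def_of_pos (hpos b le_rfl)]
        ring

/-- C^r norm: max over `0 ≤ j ≤ r` of the sup norm of `D^j φ`. -/
noncomputable def Cnorm (r : ℕ) (φ : ℝ → ℝ) : ℝ :=
  ⨆ j : Fin (r + 1), ⨆ x : ℝ, |iteratedDeriv j φ x|

/-- Hadamard's convexity inequalities: for `r₁ ≤ r₂ ≤ r₃`, `r₁ ≠ r₃`, there is `C`
depending only on `r₃` such that every 1-periodic `C^{r₃}` function `φ` satisfies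
`‖φ‖_{r₂} ≤ C ‖φ‖_{r₁}^{(r₃-r₂)/(r₃-r₁)} ‖φ‖_{r₃}^{(r₂-r₁)/(r₃-r₁)}`. -/
theorem stmt9 (r₁ r₂ r₃ : ℕ) (h12 : r₁ ≤ r₂) (h23 : r₂ ≤ r₃) (h13 : r₁ ≠ r₃) :
    ∃ C : ℝ, 0 < C ∧ ∀ φ : ℝ → ℝ, Function.Periodic φ 1 → ContDiff ℝ r₃ φ →
      Cnorm r₂ φ ≤ C * Cnorm r₁ φ ^ (((r₃ : ℝ) - r₂) / ((r₃ : ℝ) - r₁)) *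
        Cnorm r₃ φ ^ (((r₂ : ℝ) - r₁) / ((r₃ : ℝ) - r₁)) := by
  have h13' : r₁ < r₃ := lt_of_le_of_ne (h12.trans h23) h13
  set b : ℕ := r₃ - r₁ with hbdef
  have hb : 1 ≤ b := by omega
  set E : ℝ := Real.exp (Real.log 3 * (b : ℝ) ^ 2) with hE
  set C : ℝ := E + 1 with hCdef
  have hEpos : 0 < E := Real.exp_pos _
  have hC1 : 1 ≤ C := by simp only [hCdef]; linarith
  have hCpos : 0 < C := by linarith
  refine ⟨C, hCpos, ?_⟩
  intro φ hper hsm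
  set α : ℝ := ((r₃ : ℝ) - r₂) / ((r₃ : ℝ) - r₁) with hα
  set β : ℝ := ((r₂ : ℝ) - r₁) / ((r₃ : ℝ) - r₁) with hβ
  have hr13 : (0 : ℝ) < (r₃ : ℝ) - r₁ := by
    have : (r₁ : ℝ) < r₃ := by exact_mod_cast h13'
    linarith
  have hα0 : 0 ≤ α := by
    apply div_nonneg _ (le_of_lt hr13)
    have : (r₂ : ℝ) ≤ r₃ := by exact_mod_cast h23
    linarith
  have hβ0 : 0 ≤ β := by
    apply div_nonneg _ (le_of_lt hr13)
    have : (r₁ : ℝ) ≤ r₂ := by exact_mod_cast h12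
    linarith
  have hαβ : α + β = 1 := by
    rw [hα, hβ, ← add_div, div_eq_one_iff_eq (ne_of_gt hr13)]
    ring
  set M : ℕ → ℝ := fun j => ⨆ x, |iteratedDeriv j φ x| with hM
  have hcont : ∀ j, j ≤ r₃ → Continuous (iteratedDeriv j φ) := fun j hj =>
    hsm.continuous_iteratedDeriv j (by exact_mod_cast hj)
  have hdiff : ∀ j, j < r₃ → Differentiable ℝ (iteratedDeriv j φ) := fun j hj =>
    hsm.differentiable_iteratedDeriv j (by exact_mod_cast hj)
  have hle : ∀ j, j ≤ r₃ → ∀ x, |iteratedDeriv j φ x| ≤ M j := fun j hj x =>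
    le_ciSup (had_bdd (hcont j hj) (had_per_iter hper j)) x
  have hMnn : ∀ j, j ≤ r₃ → 0 ≤ M j := fun j hj =>
    le_trans (abs_nonneg _) (hle j hj 0)
  -- Cnorm facts
  have hCle : ∀ r : ℕ, ∀ j ≤ r, M j ≤ Cnorm r φ := by
    intro r j hj
    exact le_ciSup (f := fun jj : Fin (r + 1) => ⨆ x, |iteratedDeriv (jj : ℕ) φ x|)
      (Set.finite_range _).bddAbove ⟨j, by omega⟩
  have hCsup : ∀ (r : ℕ) (X : ℝ), (∀ j ≤ r, M j ≤ X) → Cnorm r φ ≤ X := by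
    intro r X h
    exact ciSup_le fun jj => h jj.val (Nat.lt_succ_iff.mp jj.isLt)
  -- if some iterated derivative vanishes identically
  have hMzero : ∀ j, iteratedDeriv j φ = (fun _ => 0) → M j = 0 := by
    intro j hj
    simp only [hM, hj, abs_zero, ciSup_const]
  rcases eq_or_lt_of_le (hMnn 0 (by omega)) with hM0 | hM0
  · -- φ ≡ 0
    have hphi : iteratedDeriv 0 φ = fun _ => 0 := by
      funext x
      have h1 := hle 0 (by omega) x
      rw [← hM0] at h1
      have := abs_nonneg (iteratedDeriv 0 φ x)
      have : |iteratedDeriv 0 φ x| = 0 := le_antisymm h1 this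
      simpa [abs_eq_zero] using this
    have hz : ∀ j, M j = 0 := fun j => hMzero j (had_up hphi j (Nat.zero_le j))
    have hL : Cnorm r₂ φ ≤ 0 := hCsup r₂ 0 (fun j _ => le_of_eq (hz j))
    refine hL.trans ?_
    have h1 : 0 ≤ Cnorm r₁ φ ^ α := Real.rpow_nonneg ((hMnn 0 (by omega)).trans (hCle r₁ 0 (by omega))) α
    have h2 : 0 ≤ Cnorm r₃ φ ^ β := Real.rpow_nonneg ((hMnn 0 (by omega)).trans (hCle r₃ 0 (by omega))) β
    positivity
  · -- M 0 > 0
    rcases eq_or_lt_of_le (hMnn r₃ le_rfl) with hMr3 | hMr3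
    · -- M r₃ = 0 : all derivatives of order ≥ 1 vanish
      have hz3 : iteratedDeriv r₃ φ = fun _ => 0 := by
        funext x
        have h1 := hle r₃ le_rfl x
        rw [← hMr3] at h1
        have h2 := abs_nonneg (iteratedDeriv r₃ φ x)
        simpa [abs_eq_zero] using le_antisymm h1 h2
      have hzj : ∀ j, 1 ≤ j → j ≤ r₃ → M j = 0 := fun j h1 h2 =>
        hMzero j (had_down hper hcont hdiff hz3 j h1 h2)
      have hNeq : ∀ r : ℕ, r ≤ r₃ → Cnorm r φ = M 0 := by
        intro r hr
        refine le_antisymm (hCsup r (M 0) ?_) (hCle r 0 (by omega))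
        intro j hj
        rcases Nat.eq_zero_or_pos j with rfl | hj1
        · exact le_rfl
        · rw [hzj j hj1 (by omega)]; exact le_of_lt hM0
      rw [hNeq r₂ h23, hNeq r₁ (h12.trans h23), hNeq r₃ le_rfl]
      have hrw : M 0 ^ α * M 0 ^ β = M 0 := by
        rw [← Real.rpow_add hM0, hαβ, Real.rpow_one]
      calc M 0 = 1 * (M 0 ^ α * M 0 ^ β) := by rw [hrw]; ring
        _ ≤ C * M 0 ^ α * M 0 ^ β := by
            rw [hrw]
            nlinarith [hM0, hC1]
    · -- main case: all M j > 0
      have hposall : ∀ j, j ≤ r₃ → 0 < M j := by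
        intro j hj
        rcases Nat.eq_zero_or_pos j with rfl | hj1
        · exact hM0
        · rcases eq_or_lt_of_le (hMnn j hj) with hMj | hMj
          · exfalso
            have hzj : iteratedDeriv j φ = fun _ => 0 := by
              funext x
              have h1 := hle j hj x
              rw [← hMj] at h1
              simpa [abs_eq_zero] using le_antisymm h1 (abs_nonneg _)
            have := hMzero r₃ (had_up hzj r₃ hj)
            rw [this] at hMr3
            exact lt_irrefl 0 hMr3
          · exact hMj
      -- apply the chain lemma to ψ = iteratedDeriv r₁ φ
      set ψ : ℝ → ℝ := iteratedDeriv r₁ φ with hψ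
      have hshift : ∀ i : ℕ, iteratedDeriv i ψ = iteratedDeriv (r₁ + i) φ := had_shift φ r₁
      have hperψ : Function.Periodic ψ 1 := had_per_iter hper r₁
      have hcontψ : ∀ i, i ≤ b → Continuous (iteratedDeriv i ψ) := by
        intro i hi
        rw [hshift i]
        exact hcont (r₁ + i) (by omega)
      have hdiffψ : ∀ i, i < b → Differentiable ℝ (iteratedDeriv i ψ) := by
        intro i hi
        rw [hshift i]
        exact hdiff (r₁ + i) (by omega)
      have hposψ : ∀ i ≤ b, 0 < ⨆ x, |iteratedDeriv i ψ x| := by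
        intro i hi
        simp only [hshift i]
        exact hposall (r₁ + i) (by omega)
      have chain := had_chain b hb ψ hperψ hcontψ hdiffψ hposψ
      simp only [hshift] at chain
      -- chain : ∀ i ≤ b, M (r₁+i) ≤ E * M (r₁+0) ^ ((b-i)/b) * M (r₁+b) ^ (i/b)
      have hr1b : r₁ + b = r₃ := by omega
      set N₁ : ℝ := Cnorm r₁ φ with hN₁
      set N₃ : ℝ := Cnorm r₃ φ with hN₃
      have hN₁pos : 0 < N₁ := lt_of_lt_of_le hM0 (hCle r₁ 0 (by omega))
      have hN13 : N₁ ≤ N₃ := hCsup r₁ N₃ (fun j hj => hCle r₃ j (by omega))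
      have hN₃pos : 0 < N₃ := lt_of_lt_of_le hN₁pos hN13
      have hquot : (1 : ℝ) ≤ N₃ / N₁ := (one_le_div hN₁pos).mpr hN13
      have hident : ∀ s : ℝ, N₁ ^ ((1 : ℝ) - s) * N₃ ^ s = N₁ * (N₃ / N₁) ^ s := by
        intro s
        rw [Real.div_rpow (le_of_lt hN₃pos) (le_of_lt hN₁pos),
          Real.rpow_sub hN₁pos, Real.rpow_one]
        field_simp
      have htarget : N₁ ^ α * N₃ ^ β = N₁ * (N₃ / N₁) ^ β := by
        have : α = 1 - β := by linarith
        rw [this]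
        exact hident β
      have key2 : ∀ j ≤ r₂, M j ≤ C * N₁ ^ α * N₃ ^ β := by
        intro j hj
        rcases le_or_gt j r₁ with hjr | hjr
        · -- small j
          have h1 : M j ≤ N₁ := hCle r₁ j hjr
          have h2 : N₁ = N₁ ^ α * N₁ ^ β := by
            rw [← Real.rpow_add hN₁pos, hαβ, Real.rpow_one]
          have h3 : N₁ ^ β ≤ N₃ ^ β := Real.rpow_le_rpow (le_of_lt hN₁pos) hN13 hβ0
          calc M j ≤ N₁ := h1
            _ = N₁ ^ α * N₁ ^ β := h2
            _ ≤ N₁ ^ α * N₃ ^ β := by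
                apply mul_le_mul_of_nonneg_left h3 (Real.rpow_nonneg (le_of_lt hN₁pos) α)
            _ ≤ C * N₁ ^ α * N₃ ^ β := by
                have hx1 : 0 ≤ N₁ ^ α := Real.rpow_nonneg (le_of_lt hN₁pos) α
                have hx3 : 0 ≤ N₃ ^ β := Real.rpow_nonneg (le_of_lt hN₃pos) β
                nlinarith [mul_nonneg hx1 hx3]
        · -- r₁ < j ≤ r₂
          set i : ℕ := j - r₁ with hidef
          have hib : i ≤ b := by omega
          have hji : r₁ + i = j := by omega
          have hch := chain i hib
          rw [hji, Nat.add_zero, hr1b] at hch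
          -- hch : M j ≤ E * M r₁ ^ (((b:ℝ)-i)/b) * M r₃ ^ ((i:ℝ)/b)
          set t : ℝ := (i : ℝ) / b with ht
          have hbpos : (0 : ℝ) < b := by exact_mod_cast hb
          have ht0 : 0 ≤ t := div_nonneg (Nat.cast_nonneg i) (le_of_lt hbpos)
          have h1t : ((b : ℝ) - i) / b = 1 - t := by
            rw [ht, sub_div, div_self (ne_of_gt hbpos)]
          have h1t0 : 0 ≤ 1 - t := by
            rw [← h1t]
            apply div_nonneg _ (le_of_lt hbpos)
            have : (i : ℝ) ≤ b := by exact_mod_cast hib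
            linarith
          rw [h1t] at hch
          have htβ : t ≤ β := by
            rw [ht, hβ]
            have hcast : ((b : ℕ) : ℝ) = (r₃ : ℝ) - r₁ := by
              rw [hbdef]; push_cast [le_of_lt h13']; ring
            have hicast : ((i : ℕ) : ℝ) ≤ (r₂ : ℝ) - r₁ := by
              rw [hidef, Nat.cast_sub (le_of_lt hjr)]
              have h2c : (j : ℝ) ≤ r₂ := Nat.cast_le.mpr hj
              linarith
            rw [hcast]
            gcongr
          have step1 : M j ≤ E * N₁ ^ ((1:ℝ) - t) * N₃ ^ t := by
            refine hch.trans ?_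
            have a1 : M r₁ ^ ((1:ℝ) - t) ≤ N₁ ^ ((1:ℝ) - t) :=
              Real.rpow_le_rpow (le_of_lt (hposall r₁ (by omega))) (hCle r₁ r₁ le_rfl) h1t0
            have a2 : M r₃ ^ t ≤ N₃ ^ t :=
              Real.rpow_le_rpow (le_of_lt (hposall r₃ le_rfl)) (hCle r₃ r₃ le_rfl) ht0
            have b1 : 0 ≤ M r₃ ^ t := Real.rpow_nonneg (le_of_lt (hposall r₃ le_rfl)) t
            have b2 : 0 ≤ N₁ ^ ((1:ℝ) - t) := Real.rpow_nonneg (le_of_lt hN₁pos) _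
            have b3 : 0 ≤ E := le_of_lt hEpos
            calc E * M r₁ ^ ((1:ℝ) - t) * M r₃ ^ t
                ≤ E * N₁ ^ ((1:ℝ) - t) * M r₃ ^ t := by
                  apply mul_le_mul_of_nonneg_right (mul_le_mul_of_nonneg_left a1 b3) b1
              _ ≤ E * N₁ ^ ((1:ℝ) - t) * N₃ ^ t := by
                  apply mul_le_mul_of_nonneg_left a2 (by positivity)
          have step2 : N₁ ^ ((1:ℝ) - t) * N₃ ^ t ≤ N₁ ^ α * N₃ ^ β := by
            rw [hident t, htarget]
            apply mul_le_mul_of_nonneg_left _ (le_of_lt hN₁pos)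
            exact Real.rpow_le_rpow_of_exponent_le hquot htβ
          have hnn : 0 ≤ N₁ ^ α * N₃ ^ β :=
            mul_nonneg (Real.rpow_nonneg (le_of_lt hN₁pos) α)
              (Real.rpow_nonneg (le_of_lt hN₃pos) β)
          have hEC : E ≤ C := by rw [hCdef]; linarith
          calc M j ≤ E * (N₁ ^ ((1:ℝ) - t) * N₃ ^ t) := by rw [← mul_assoc]; exact step1
            _ ≤ E * (N₁ ^ α * N₃ ^ β) := mul_le_mul_of_nonneg_left step2 (le_of_lt hEpos)
            _ ≤ C * (N₁ ^ α * N₃ ^ β) := mul_le_mul_of_nonneg_right hEC hnn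
            _ = C * N₁ ^ α * N₃ ^ β := by ring
      exact hCsup r₂ _ key2
end

section
/- Let α ∈ (0, 1/4) be irrational with convergent denominators (q_s). Define K_α = { Σ_{s=1}^∞ b_s ⟨q_s α⟩ : (b_s) ∈ {0,1}^{ℕ*} }, where ⟨β⟩ denotes the representative of β mod 1 in [−1/2,1/2). Then every element of K_α is a limit of elements of ℤ + αℤ: precisely, for each (b_s) ∈ {0,1}^{ℕ*}, setting n_S = Σ_{s=1}^S b_s q_s, the partial sums Σ_{s=1}^S b_s ⟨q_s α⟩ equal ⟨n_S α⟩ ∈ ℤ + αℤ and converge to the corresponding element of K_α. -/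
namespace Stmt14Aux

open GenContFract

variable {α : ℝ}

/-- The error term `B_n α − A_n`. -/
noncomputable def eps (α : ℝ) (n : ℕ) : ℝ :=
  (GenContFract.of α).dens n * α - (GenContFract.of α).nums n

/-- The signed error term; it will be shown positive. -/
noncomputable def del (α : ℝ) (n : ℕ) : ℝ := (-1 : ℝ) ^ n * eps α n

lemma notTerm (hirr : Irrational α) (n : ℕ) : ¬(GenContFract.of α).TerminatedAt n := by
  intro h
  obtain ⟨q, hq⟩ := (terminates_iff_rat α).mp ⟨n, h⟩
  exact hirr ⟨q, hq.symm⟩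

lemma someS (hirr : Irrational α) (n : ℕ) : ∃ gp, (GenContFract.of α).s.get? n = some gp :=
  Option.ne_none_iff_exists'.mp (fun h => notTerm hirr n (terminatedAt_iff_s_none.mpr h))

lemma streamSome (hirr : Irrational α) (n : ℕ) :
    ∃ ifp, IntFractPair.stream α n = some ifp ∧ ifp.fr ≠ 0 := by
  have h1 : IntFractPair.stream α n ≠ none := by
    cases n with
    | zero => simp [IntFractPair.stream_zero]
    | succ m =>
      intro h
      exact notTerm hirr m (of_terminatedAt_n_iff_succ_nth_intFractPair_stream_eq_none.mpr h)
  obtain ⟨ifp, hifp⟩ := Option.ne_none_iff_exists'.mp h1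
  refine ⟨ifp, hifp, fun hfr => ?_⟩
  exact notTerm hirr n (of_terminatedAt_n_iff_succ_nth_intFractPair_stream_eq_none.mpr
    (IntFractPair.stream_eq_none_of_fr_eq_zero hifp hfr))

lemma densPos (hirr : Irrational α) (n : ℕ) : 0 < (GenContFract.of α).dens n := by
  have h : (Nat.fib (n + 1) : ℝ) ≤ (GenContFract.of α).dens n :=
    succ_nth_fib_le_of_nth_den (Or.inr (notTerm hirr (n - 1)))
  have : (0 : ℝ) < (Nat.fib (n + 1) : ℝ) := by
    exact_mod_cast Nat.fib_pos.mpr n.succ_pos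
  linarith

lemma delPos (hirr : Irrational α) (n : ℕ) : 0 < del α n := by
  obtain ⟨ifp, hst, hfr⟩ := streamSome hirr n
  have h := sub_convs_eq hst
  simp only [if_neg hfr] at h
  have hB : ((GenContFract.of α).contsAux (n + 1)).b = (GenContFract.of α).dens n := by
    rw [den_eq_conts_b, nth_cont_eq_succ_nth_contAux]
  rw [hB] at h
  have hfr0 : 0 < ifp.fr :=
    lt_of_le_of_ne (IntFractPair.nth_stream_fr_nonneg hst) (Ne.symm hfr)
  have hpB : (0 : ℝ) ≤ ((GenContFract.of α).contsAux n).b := zero_le_of_contsAux_b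
  have hBpos : 0 < (GenContFract.of α).dens n := densPos hirr n
  have hD : 0 < ifp.fr⁻¹ * (GenContFract.of α).dens n + ((GenContFract.of α).contsAux n).b := by positivity
  have heps : eps α n =
      (-1 : ℝ) ^ n * (1 / (ifp.fr⁻¹ * (GenContFract.of α).dens n + ((GenContFract.of α).contsAux n).b)) := by
    have h2 : (GenContFract.of α).dens n * α - (GenContFract.of α).nums n = (GenContFract.of α).dens n * (α - (GenContFract.of α).convs n) := by
      rw [conv_eq_num_div_den]
      field_simp
    unfold eps
    rw [h2, h]
    field_simp
  have hsq : (-1 : ℝ) ^ n * (-1 : ℝ) ^ n = 1 := by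
    rw [← pow_add]
    exact Even.neg_one_pow ⟨n, rfl⟩
  unfold del
  rw [heps, ← mul_assoc, hsq, one_mul]
  positivity

lemma abs_eps (hirr : Irrational α) (n : ℕ) : |eps α n| = del α n := by
  have h := delPos hirr n
  have h2 : |del α n| = del α n := abs_of_pos h
  unfold del at *
  rwa [abs_mul, abs_pow, abs_neg, abs_one, one_pow, one_mul] at h2

lemma pairIneq (hirr : Irrational α) (n : ℕ) :
    del α (n + 1) + del α (n + 2) ≤ del α n := by
  obtain ⟨gp, hs⟩ := someS hirr (n + 1)
  have ha : gp.a = 1 := of_partNum_eq_one (partNum_eq_s_a hs)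
  have hb1 : (1 : ℝ) ≤ gp.b := of_one_le_get?_partDen (partDen_eq_s_b hs)
  have hnum := nums_recurrence hs rfl rfl
  have hden := dens_recurrence hs rfl rfl
  have hrec : eps α (n + 2) = gp.b * eps α (n + 1) + eps α n := by
    unfold eps
    rw [hnum, hden, ha]
    ring
  have h1 : ((-1 : ℝ)) ^ (n + 1) = -((-1 : ℝ) ^ n) := by rw [pow_succ]; ring
  have h2 : ((-1 : ℝ)) ^ (n + 2) = (-1 : ℝ) ^ n := by rw [pow_succ, pow_succ]; ring
  have e2 : del α (n + 2) = del α n - gp.b * del α (n + 1) := by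
    unfold del
    rw [h2, h1, hrec]
    ring
  have hd1 : 0 < del α (n + 1) := delPos hirr (n + 1)
  nlinarith

lemma sumRangeLe (hirr : Irrational α) :
    ∀ k m, (∑ i ∈ Finset.range k, del α (m + 1 + i)) ≤ del α m + del α (m + 1) := by
  intro k
  induction k with
  | zero =>
    intro m
    simp only [Finset.range_zero, Finset.sum_empty]
    have := delPos hirr m
    have := delPos hirr (m + 1)
    linarith
  | succ k ih =>
    intro m
    have hcongr : ∀ i ∈ Finset.range k, del α (m + 1 + (i + 1)) = del α (m + 2 + i) := by
      intro i _; congr 1; try omega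
    rw [Finset.sum_range_succ', Finset.sum_congr rfl hcongr]
    simp only [Nat.add_zero]
    have h1 : (∑ i ∈ Finset.range k, del α (m + 2 + i)) ≤ del α (m + 1) + del α (m + 2) := by
      have := ih (m + 1)
      have e : ∀ i ∈ Finset.range k, del α (m + 1 + 1 + i) = del α (m + 2 + i) := by
        intro i _; congr 1; try omega
      rw [Finset.sum_congr rfl e, show m + 1 + 1 = m + 2 from rfl] at this
      exact this
    have h2 := pairIneq hirr m
    linarith

lemma del_zero (hirr : Irrational α) (hα : α ∈ Set.Ioo (0 : ℝ) (1/4)) : del α 0 = α := by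
  have hfloor : ⌊α⌋ = 0 := Int.floor_eq_zero_iff.mpr ⟨hα.1.le, by linarith [hα.2]⟩
  unfold del eps
  rw [zeroth_den_eq_one, zeroth_num_eq_h, of_h_eq_floor, hfloor]
  simp

lemma sum_le_two_alpha (hirr : Irrational α) (hα : α ∈ Set.Ioo (0 : ℝ) (1/4)) (N : ℕ) :
    (∑ i ∈ Finset.range N, del α (1 + i)) ≤ 2 * α := by
  have h := sumRangeLe hirr N 0
  simp only [Nat.zero_add] at h
  have h01 : del α 1 ≤ del α 0 := by
    have := pairIneq hirr 0
    have := delPos hirr 2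
    linarith
  rw [del_zero hirr hα] at h h01
  linarith

lemma del_lt_half (hirr : Irrational α) (hα : α ∈ Set.Ioo (0 : ℝ) (1/4)) {s : ℕ}
    (hs : 1 ≤ s) : del α s < 1 / 2 := by
  have hmem : s - 1 ∈ Finset.range s := Finset.mem_range.mpr (by omega)
  have hsingle : del α (1 + (s - 1)) ≤ ∑ i ∈ Finset.range s, del α (1 + i) :=
    Finset.single_le_sum (fun i _ => (delPos hirr (1 + i)).le) hmem
  have harith : 1 + (s - 1) = s := by omega
  rw [harith] at hsingle
  have := sum_le_two_alpha hirr hα s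
  have := hα.2
  linarith

lemma numsInt (hirr : Irrational α) : ∀ n, ∃ p : ℤ, (GenContFract.of α).nums n = (p : ℝ) := by
  have key : ∀ n, (∃ p : ℤ, (GenContFract.of α).nums n = (p : ℝ)) ∧
      (∃ p : ℤ, (GenContFract.of α).nums (n + 1) = (p : ℝ)) := by
    intro n
    induction n with
    | zero =>
      constructor
      · exact ⟨⌊α⌋, by rw [zeroth_num_eq_h, of_h_eq_floor]⟩
      · obtain ⟨gp, hs⟩ := someS hirr 0
        have ha : gp.a = 1 := of_partNum_eq_one (partNum_eq_s_a hs)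
        obtain ⟨z, hz⟩ := exists_int_eq_of_partDen (partDen_eq_s_b hs)
        refine ⟨z * ⌊α⌋ + 1, ?_⟩
        rw [first_num_eq hs, ha, of_h_eq_floor, hz]
        push_cast
        ring
    | succ n ih =>
      refine ⟨ih.2, ?_⟩
      obtain ⟨gp, hs⟩ := someS hirr (n + 1)
      obtain ⟨p0, hp0⟩ := ih.1
      obtain ⟨p1, hp1⟩ := ih.2
      have ha : gp.a = 1 := of_partNum_eq_one (partNum_eq_s_a hs)
      obtain ⟨z, hz⟩ := exists_int_eq_of_partDen (partDen_eq_s_b hs)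
      refine ⟨z * p1 + p0, ?_⟩
      rw [nums_recurrence hs hp0 hp1, ha, hz]
      push_cast
      ring
  exact fun n => (key n).1

lemma repr1_int_add (p : ℤ) (x : ℝ) (hx1 : -(1/2) ≤ x) (hx2 : x < 1/2) :
    repr1 ((p : ℝ) + x) = x := by
  unfold repr1
  rw [round_intCast_add, round_eq_zero_iff.mpr ⟨hx1, hx2⟩]
  push_cast
  ring

lemma repr1_dens (hirr : Irrational α) (hα : α ∈ Set.Ioo (0 : ℝ) (1/4)) {s : ℕ}
    (hs : 1 ≤ s) : repr1 ((GenContFract.of α).dens s * α) = eps α s := by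
  obtain ⟨p, hp⟩ := numsInt hirr s
  have hsplit : (GenContFract.of α).dens s * α = (p : ℝ) + eps α s := by
    unfold eps; rw [← hp]; ring
  have habs : |eps α s| < 1/2 := by
    rw [abs_eps hirr]
    exact del_lt_half hirr hα hs
  rw [abs_lt] at habs
  rw [hsplit, repr1_int_add p _ (by linarith [habs.1]) habs.2]

end Stmt14Aux

open Stmt14Aux GenContFract in
/-- Let `α ∈ (0,1/4)` be irrational, with convergent denominators `q_s`, and let
`(b_s) ∈ {0,1}^{ℕ*}`. Then the partial sums `Σ_{s=1}^S b_s ⟨q_s α⟩` equal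
`⟨n_S α⟩` with `n_S = Σ_{s=1}^S b_s q_s`, the series is summable, and the partial
sums converge to the corresponding element of `K_α`. -/
theorem stmt14 (α : ℝ) (hirr : Irrational α) (hα : α ∈ Set.Ioo (0 : ℝ) (1/4))
    (q : ℕ → ℝ) (hq : ∀ s, q s = (GenContFract.of α).dens s)
    (b : ℕ → ℕ) (hb : ∀ s, b s ≤ 1) :
    (∀ S : ℕ, repr1 ((∑ s ∈ Finset.Icc 1 S, (b s : ℝ) * q s) * α) =
        ∑ s ∈ Finset.Icc 1 S, (b s : ℝ) * repr1 (q s * α)) ∧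
      Summable (fun s : ℕ => (b (s + 1) : ℝ) * repr1 (q (s + 1) * α)) ∧
      Filter.Tendsto
        (fun S : ℕ => ∑ s ∈ Finset.Icc 1 S, (b s : ℝ) * repr1 (q s * α))
        Filter.atTop
        (nhds (∑' s : ℕ, (b (s + 1) : ℝ) * repr1 (q (s + 1) * α))) := by
  simp only [hq]
  have hbR : ∀ s, (0 : ℝ) ≤ (b s : ℝ) ∧ (b s : ℝ) ≤ 1 := fun s =>
    ⟨Nat.cast_nonneg _, by exact_mod_cast hb s⟩
  have hrepr : ∀ s : ℕ, 1 ≤ s → repr1 ((GenContFract.of α).dens s * α) = eps α s :=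
    fun s hs => repr1_dens hirr hα hs
  -- sums over `Icc 1 S` versus `range S`
  have hIccRange : ∀ (f : ℕ → ℝ) (S : ℕ),
      (∑ s ∈ Finset.Icc 1 S, f s) = ∑ i ∈ Finset.range S, f (1 + i) := by
    intro f S
    rw [← Finset.Ico_add_one_right_eq_Icc, Finset.sum_Ico_eq_sum_range]
    simp
  -- the partial sums of `del` are bounded
  have hTbound : ∀ S : ℕ, |∑ s ∈ Finset.Icc 1 S, (b s : ℝ) * eps α s| < 1/2 := by
    intro S
    have h1 : |∑ s ∈ Finset.Icc 1 S, (b s : ℝ) * eps α s| ≤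
        ∑ s ∈ Finset.Icc 1 S, del α s := by
      refine (Finset.abs_sum_le_sum_abs _ _).trans (Finset.sum_le_sum fun s _ => ?_)
      rw [abs_mul, Nat.abs_cast, abs_eps hirr]
      calc (b s : ℝ) * del α s ≤ 1 * del α s :=
            mul_le_mul_of_nonneg_right (hbR s).2 (delPos hirr s).le
        _ = del α s := one_mul _
    have h2 : (∑ s ∈ Finset.Icc 1 S, del α s) ≤ 2 * α := by
      rw [hIccRange (del α) S]
      exact sum_le_two_alpha hirr hα S
    have := hα.2
    linarith
  -- main splitting of the partial sums
  obtain ⟨p, hp⟩ := Classical.axiomOfChoice (numsInt hirr)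
  have hsplit : ∀ S : ℕ,
      (∑ s ∈ Finset.Icc 1 S, (b s : ℝ) * (GenContFract.of α).dens s) * α =
        ((∑ s ∈ Finset.Icc 1 S, (b s : ℤ) * p s : ℤ) : ℝ) +
          ∑ s ∈ Finset.Icc 1 S, (b s : ℝ) * eps α s := by
    intro S
    push_cast
    rw [Finset.sum_mul, ← Finset.sum_add_distrib]
    refine Finset.sum_congr rfl fun s _ => ?_
    have : (GenContFract.of α).dens s * α = (p s : ℝ) + eps α s := by
      unfold eps; rw [← hp s]; ring
    rw [mul_assoc, this]
    ring
  have part1 : ∀ S : ℕ, repr1 ((∑ s ∈ Finset.Icc 1 S, (b s : ℝ) * (GenContFract.of α).dens s) * α) =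
      ∑ s ∈ Finset.Icc 1 S, (b s : ℝ) * repr1 ((GenContFract.of α).dens s * α) := by
    intro S
    have hT := hTbound S
    rw [abs_lt] at hT
    rw [hsplit S, repr1_int_add _ _ (by linarith [hT.1]) hT.2]
    refine (Finset.sum_congr rfl fun s hs => ?_).symm
    rw [hrepr s (Finset.mem_Icc.mp hs).1]
  -- summability
  have hfe : (fun s : ℕ => (b (s + 1) : ℝ) * repr1 ((GenContFract.of α).dens (s + 1) * α)) =
      fun s : ℕ => (b (s + 1) : ℝ) * eps α (s + 1) := by
    funext s
    rw [hrepr (s + 1) (by omega)]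
  have hsumdel : Summable (fun s : ℕ => del α (s + 1)) := by
    apply summable_of_sum_range_le (c := 2 * α) (fun n => (delPos hirr (n + 1)).le)
    intro n
    have h := sum_le_two_alpha hirr hα n
    simpa [add_comm] using h
  have part2 : Summable (fun s : ℕ => (b (s + 1) : ℝ) * repr1 ((GenContFract.of α).dens (s + 1) * α)) := by
    rw [hfe]
    apply Summable.of_abs
    refine Summable.of_nonneg_of_le (fun s => abs_nonneg _) (fun s => ?_) hsumdel
    rw [abs_mul, Nat.abs_cast, abs_eps hirr]
    calc (b (s + 1) : ℝ) * del α (s + 1) ≤ 1 * del α (s + 1) :=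
          mul_le_mul_of_nonneg_right (hbR (s + 1)).2 (delPos hirr (s + 1)).le
      _ = del α (s + 1) := one_mul _
  refine ⟨part1, part2, ?_⟩
  have h3 := part2.hasSum.tendsto_sum_nat
  have heq : (fun S : ℕ => ∑ s ∈ Finset.Icc 1 S, (b s : ℝ) * repr1 ((GenContFract.of α).dens s * α)) =
      fun S : ℕ => ∑ i ∈ Finset.range S,
        (b (i + 1) : ℝ) * repr1 ((GenContFract.of α).dens (i + 1) * α) := by
    funext S
    rw [hIccRange (fun s => (b s : ℝ) * repr1 ((GenContFract.of α).dens s * α)) S]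
    simp [add_comm]
  rw [heq]
  exact h3
end
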